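/- If a_1,…,a_n are distinct keys, R̂ is a permutation of [n] giving predicted ranks, η_i = |Rank_i − R̂_i| ≤ 2^ξ − 2 for all i (i.e., log₂(η_i + 2) ≤ ξ), and π sorts keys by predicted rank, then the pointer prediction error η'_i = |rank(a_{π(i)}, A^π_{i−1}) − rank(a_{π(i−1)}, A^π_{i−1})| satisfies log₂(η'_i + 2) ≤ 2ξ for all i ∈ {2,…,n}. -/

import Mathlib

lemma prefix_rank_diff {α : Type*} [LinearOrder α] {n : ℕ} (a : Fin n → α)
    (π : Equiv.Perm (Fin n)) (i : Fin n) {x y : α} (hxy : x ≤ y) :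
    (((Finset.univ.filter fun k : Fin n => (k : ℕ) < (i : ℕ) ∧ a (π k) ≤ y)).card : ℤ)
      - (((Finset.univ.filter fun k : Fin n => (k : ℕ) < (i : ℕ) ∧ a (π k) ≤ x)).card : ℤ)
    ≤ (((Finset.univ.filter fun k : Fin n => a k ≤ y)).card : ℤ)
      - (((Finset.univ.filter fun k : Fin n => a k ≤ x)).card : ℤ) := by
  set Px := (Finset.univ.filter fun k : Fin n => (k : ℕ) < (i : ℕ) ∧ a (π k) ≤ x) with hPx
  set Py := (Finset.univ.filter fun k : Fin n => (k : ℕ) < (i : ℕ) ∧ a (π k) ≤ y) with hPy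
  set Gx := (Finset.univ.filter fun k : Fin n => a k ≤ x) with hGx
  set Gy := (Finset.univ.filter fun k : Fin n => a k ≤ y) with hGy
  have hPsub : Px ⊆ Py := by
    intro k hk
    simp only [hPx, hPy, Finset.mem_filter, Finset.mem_univ, true_and] at hk ⊢
    exact ⟨hk.1, le_trans hk.2 hxy⟩
  have hGsub : Gx ⊆ Gy := by
    intro k hk
    simp only [hGx, hGy, Finset.mem_filter, Finset.mem_univ, true_and] at hk ⊢
    exact le_trans hk hxy
  have hcard : (Py \ Px).card ≤ (Gy \ Gx).card := by
    apply Finset.card_le_card_of_injOn (fun k => π k)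
    · intro k hk
      simp only [hPx, hPy, hGx, hGy, Finset.mem_coe, Finset.mem_sdiff, Finset.mem_filter,
        Finset.mem_univ, true_and] at hk ⊢
      obtain ⟨⟨h1, h2⟩, h3⟩ := hk
      exact ⟨h2, fun hle => h3 ⟨h1, hle⟩⟩
    · intro u _ v _ huv
      exact π.injective huv
  have e1 : (Py \ Px).card = Py.card - Px.card := Finset.card_sdiff_of_subset hPsub
  have e2 : (Gy \ Gx).card = Gy.card - Gx.card := Finset.card_sdiff_of_subset hGsub
  have l1 : Px.card ≤ Py.card := Finset.card_le_card hPsub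
  have l2 : Gx.card ≤ Gy.card := Finset.card_le_card hGsub
  omega

theorem stmt_12 {α : Type*} [LinearOrder α] (n : ℕ) (a : Fin n → α)
    (ha : Function.Injective a) (Rhat : Fin n → ℕ) (π : Equiv.Perm (Fin n))
    (hperm : ∀ i : Fin n, Rhat (π i) = (i : ℕ) + 1)
    (Rank : Fin n → ℕ) (hRank : ∀ i, Rank i = (Finset.univ.filter fun k => a k ≤ a i).card)
    (η : Fin n → ℕ) (hη : ∀ i, (η i : ℤ) = |(Rank i : ℤ) - (Rhat i : ℤ)|)
    (ξ : ℝ) (herr : ∀ i, Real.logb 2 ((η i : ℝ) + 2) ≤ ξ) :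
    ∀ i j : Fin n, (j : ℕ) + 1 = (i : ℕ) →
      Real.logb 2
        ((((((Finset.univ.filter fun k : Fin n => (k : ℕ) < (i : ℕ) ∧ a (π k) ≤ a (π i))).card : ℤ)
          - (((Finset.univ.filter fun k : Fin n => (k : ℕ) < (i : ℕ) ∧ a (π k) ≤ a (π j))).card : ℤ)).natAbs
          : ℝ) + 2) ≤ 2 * ξ := by
  intro i j hij
  set A := η (π i) with hA
  set B := η (π j) with hB
  set ci := ((Finset.univ.filter fun k : Fin n => (k : ℕ) < (i : ℕ) ∧ a (π k) ≤ a (π i))).card with hci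
  set cj := ((Finset.univ.filter fun k : Fin n => (k : ℕ) < (i : ℕ) ∧ a (π k) ≤ a (π j))).card with hcj
  have hRi := hη (π i); rw [hperm i] at hRi
  have hRj := hη (π j); rw [hperm j] at hRj
  have hRiabs := abs_le.mp (le_of_eq hRi.symm)
  have hRjabs := abs_le.mp (le_of_eq hRj.symm)
  -- combinatorial bound : |ci - cj| ≤ A + B + 1
  have key : ((ci : ℤ) - cj).natAbs ≤ A + B + 1 := by
    have hGi : ((Finset.univ.filter fun k : Fin n => a k ≤ a (π i))).card = Rank (π i) :=
      (hRank (π i)).symm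
    have hGj : ((Finset.univ.filter fun k : Fin n => a k ≤ a (π j))).card = Rank (π j) :=
      (hRank (π j)).symm
    rcases le_total (a (π j)) (a (π i)) with hle | hle
    · have h1 := prefix_rank_diff a π i hle
      rw [hGi, hGj, ← hci, ← hcj] at h1
      have h2 : (cj : ℤ) ≤ ci := by
        have hsub : (Finset.univ.filter fun k : Fin n => (k : ℕ) < (i : ℕ) ∧ a (π k) ≤ a (π j)) ⊆
            (Finset.univ.filter fun k : Fin n => (k : ℕ) < (i : ℕ) ∧ a (π k) ≤ a (π i)) := by
          intro k hk
          simp only [Finset.mem_filter, Finset.mem_univ, true_and] at hk ⊢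
          exact ⟨hk.1, le_trans hk.2 hle⟩
        exact_mod_cast Finset.card_le_card hsub
      omega
    · have h1 := prefix_rank_diff a π i hle
      rw [hGi, hGj, ← hci, ← hcj] at h1
      have h2 : (ci : ℤ) ≤ cj := by
        have hsub : (Finset.univ.filter fun k : Fin n => (k : ℕ) < (i : ℕ) ∧ a (π k) ≤ a (π i)) ⊆
            (Finset.univ.filter fun k : Fin n => (k : ℕ) < (i : ℕ) ∧ a (π k) ≤ a (π j)) := by
          intro k hk
          simp only [Finset.mem_filter, Finset.mem_univ, true_and] at hk ⊢
          exact ⟨hk.1, le_trans hk.2 hle⟩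
        exact_mod_cast Finset.card_le_card hsub
      omega
  -- real/log part
  set d := ((ci : ℤ) - cj).natAbs with hd
  have hdR : (d : ℝ) + 2 ≤ ((A : ℝ) + 2) * ((B : ℝ) + 2) := by
    have h1 : (d : ℝ) ≤ (A : ℝ) + B + 1 := by exact_mod_cast key
    have h2 : (0:ℝ) ≤ (A : ℝ) := Nat.cast_nonneg A
    have h3 : (0:ℝ) ≤ (B : ℝ) := Nat.cast_nonneg B
    nlinarith
  have hdpos : (0:ℝ) < (d : ℝ) + 2 := by positivity
  have hApos : (0:ℝ) < (A : ℝ) + 2 := by positivity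
  have hBpos : (0:ℝ) < (B : ℝ) + 2 := by positivity
  calc Real.logb 2 ((d : ℝ) + 2)
      ≤ Real.logb 2 (((A : ℝ) + 2) * ((B : ℝ) + 2)) := by
        rw [Real.logb_le_logb (by norm_num) hdpos (by positivity)]
        exact hdR
    _ = Real.logb 2 ((A : ℝ) + 2) + Real.logb 2 ((B : ℝ) + 2) :=
        Real.logb_mul (ne_of_gt hApos) (ne_of_gt hBpos)
    _ ≤ ξ + ξ := add_le_add (herr (π i)) (herr (π j))
    _ = 2 * ξ := by ring
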